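/- Let C be a cost structure over alphabets α, β with costs in ℕ, let k ∈ ℕ, and let C + k denote the cost structure obtained by adding k to every insert, delete, and substitution cost of C. Then for all lists Q and R of lengths m and n respectively, levenshtein (C + k) Q R ≤ levenshtein C Q R + (m + n)·k. -/

import Mathlib

/-- A cost structure for Levenshtein edit distance (as in the former Mathlib file
`Mathlib/Data/List/EditDistance/Defs.lean`, since removed from Mathlib). -/
structure Levenshtein.Cost (α β δ : Type*) where
  /-- Cost to delete an element from a list. -/
  delete : α → δ
  /-- Cost in insert an element into a list. -/
  insert : β → δ
  /-- Cost to substitute one element for another in a list. -/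
  substitute : α → β → δ

/-- (Implementation detail for `levenshtein`, as in former Mathlib.) -/
def Levenshtein.impl {α β δ : Type*} [AddZeroClass δ] [Min δ]
    (C : Levenshtein.Cost α β δ) (xs : List α) (y : β) (d : {r : List δ // 0 < r.length}) :
    {r : List δ // 0 < r.length} :=
  let ⟨ds, w⟩ := d
  xs.zip (ds.zip ds.tail) |>.foldr
    (init := ⟨[C.insert y + ds.getLast (List.ne_nil_of_length_pos w)], by simp⟩)
    (fun ⟨x, d₀, d₁⟩ ⟨r, w⟩ =>
      ⟨min (C.delete x + r[0]) (min (C.insert y + d₀) (C.substitute x y + d₁)) :: r, by simp⟩)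

/-- `suffixLevenshtein C xs ys` computes the Levenshtein distance (using the cost functions
provided by `C`) from each suffix of `xs` to `ys` (as in former Mathlib). -/
def suffixLevenshtein {α β δ : Type*} [AddZeroClass δ] [Min δ]
    (C : Levenshtein.Cost α β δ) (xs : List α) (ys : List β) :
    {r : List δ // 0 < r.length} :=
  ys.foldr
    (Levenshtein.impl C xs)
    (xs.foldr (init := ⟨[0], by simp⟩) (fun a ⟨r, w⟩ => ⟨(C.delete a + r[0]) :: r, by simp⟩))

/-- The Levenshtein distance between two lists, using the cost functions provided by `C`
(as in former Mathlib). -/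
def levenshtein {α β δ : Type*} [AddZeroClass δ] [Min δ]
    (C : Levenshtein.Cost α β δ) (xs : List α) (ys : List β) : δ :=
  let ⟨r, w⟩ := suffixLevenshtein C xs ys
  r[0]


namespace LevPort

variable {α β δ : Type*} [AddZeroClass δ] [Min δ] (C : Levenshtein.Cost α β δ)

theorem impl_cons {x : α} {xs : List α} {y : β} {d : δ} {ds : List δ} (w) (w' : 0 < List.length ds) :
    Levenshtein.impl C (x :: xs) y ⟨d :: ds, w⟩ =
      let ⟨r, w⟩ := Levenshtein.impl C xs y ⟨ds, w'⟩
      ⟨min (C.delete x + r[0]) (min (C.insert y + d) (C.substitute x y + ds[0])) :: r, by simp⟩ :=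
  match ds, w' with | _ :: _, _ => rfl

theorem impl_length {xs : List α} {y : β} (d : {r : List δ // 0 < r.length})
    (w : d.1.length = xs.length + 1) :
    (Levenshtein.impl C xs y d).1.length = xs.length + 1 := by
  induction xs generalizing d with
  | nil => rfl
  | cons x xs ih =>
    dsimp [Levenshtein.impl]
    match d, w with
    | ⟨d₁ :: d₂ :: ds, _⟩, w =>
      dsimp
      congr 1
      exact ih ⟨d₂ :: ds, (by simp)⟩ (by simpa using w)

theorem suffixLevenshtein_length (xs : List α) (ys : List β) :
    (suffixLevenshtein C xs ys).1.length = xs.length + 1 := by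
  induction ys with
  | nil =>
    dsimp [suffixLevenshtein]
    induction xs with
    | nil => rfl
    | cons _ xs ih =>
      simp_all
  | cons y ys ih =>
    dsimp [suffixLevenshtein]
    rw [impl_length]
    exact ih

theorem suffixLevenshtein_cons₂ (xs : List α) (y : β) (ys : List β) :
    suffixLevenshtein C xs (y :: ys) = (Levenshtein.impl C xs) y (suffixLevenshtein C xs ys) := rfl

theorem suffixLevenshtein_cons₁_aux {α} {x y : {r : List α // 0 < r.length}}
    (w₀ : x.1[0]'x.2 = y.1[0]'y.2) (w : x.1.tail = y.1.tail) : x = y := by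
  match x, y with
  | ⟨hx :: tx, _⟩, ⟨hy :: ty, _⟩ => simp_all

theorem suffixLevenshtein_cons₁ (x : α) (xs : List α) (ys : List β) :
    suffixLevenshtein C (x :: xs) ys =
      ⟨levenshtein C (x :: xs) ys ::
        (suffixLevenshtein C xs ys).1, by simp⟩ := by
  induction ys with
  | nil =>
    dsimp [levenshtein, suffixLevenshtein]
    rfl
  | cons y ys ih =>
    apply suffixLevenshtein_cons₁_aux
    · rfl
    · rw [suffixLevenshtein_cons₂ C (x :: xs), ih, impl_cons]
      · rfl
      · simp [suffixLevenshtein_length]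

theorem impl_cons_fst_zero {x : α} {xs : List α} {y : β} {d : δ} {ds : List δ} (w)
    (w' : 0 < List.length ds) (p) :
    (Levenshtein.impl C (x :: xs) y ⟨d :: ds, w⟩).1[0]'p =
      min (C.delete x + (Levenshtein.impl C xs y ⟨ds, w'⟩).1[0]'(Levenshtein.impl C xs y ⟨ds, w'⟩).2)
        (min (C.insert y + d) (C.substitute x y + ds[0])) :=
  match ds, w' with | _ :: _, _ => rfl

end LevPort

@[simp]
theorem levenshtein_nil_nil {α β δ : Type*} [AddZeroClass δ] [Min δ]
    (C : Levenshtein.Cost α β δ) : levenshtein C ([] : List α) ([] : List β) = 0 := rfl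

theorem levenshtein_nil_cons {α β δ : Type*} [AddZeroClass δ] [Min δ]
    (C : Levenshtein.Cost α β δ) (y : β) (ys : List β) :
    levenshtein C [] (y :: ys) = C.insert y + levenshtein C [] ys := by
  have key : ∀ (S : {r : List δ // 0 < r.length}) (p), S.1.length = 1 →
      (Levenshtein.impl C [] y S).1[0]'p = C.insert y + S.1[0]'S.2 := by
    rintro ⟨_ | ⟨d, _ | ⟨e, t⟩⟩, w⟩ p h
    · simp at h
    · rfl
    · simp at h
  exact key _ _ (LevPort.suffixLevenshtein_length C [] ys)

theorem levenshtein_cons_nil {α β δ : Type*} [AddZeroClass δ] [Min δ]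
    (C : Levenshtein.Cost α β δ) (x : α) (xs : List α) :
    levenshtein C (x :: xs) [] = C.delete x + levenshtein C xs [] :=
  rfl

theorem levenshtein_cons_cons {α β δ : Type*} [AddZeroClass δ] [Min δ]
    (C : Levenshtein.Cost α β δ) (x : α) (xs : List α) (y : β) (ys : List β) :
    levenshtein C (x :: xs) (y :: ys) =
      min (C.delete x + levenshtein C xs (y :: ys))
        (min (C.insert y + levenshtein C (x :: xs) ys)
          (C.substitute x y + levenshtein C xs ys)) := by
  change (Levenshtein.impl C (x :: xs) y (suffixLevenshtein C (x :: xs) ys)).1[0]'_ = _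
  have key : ∀ (S : {r : List δ // 0 < r.length}) (p),
      S = ⟨levenshtein C (x :: xs) ys :: (suffixLevenshtein C xs ys).1, by simp⟩ →
      (Levenshtein.impl C (x :: xs) y S).1[0]'p =
      min (C.delete x + levenshtein C xs (y :: ys))
        (min (C.insert y + levenshtein C (x :: xs) ys)
          (C.substitute x y + levenshtein C xs ys)) := by
    rintro S p rfl
    exact LevPort.impl_cons_fst_zero C _ (by simp [LevPort.suffixLevenshtein_length]) _
  exact key _ _ (LevPort.suffixLevenshtein_cons₁ C x xs ys)

/-- The cost structure obtained by adding `k` to every insert, delete, and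
substitution cost of `C`. -/
def Levenshtein.Cost.addConst {α β : Type*} (C : Levenshtein.Cost α β ℕ) (k : ℕ) :
    Levenshtein.Cost α β ℕ where
  delete a := C.delete a + k
  insert b := C.insert b + k
  substitute a b := C.substitute a b + k

/-- **Upper bound for shifted gap penalties (Lemma 3, upper half).**
Adding `k` to every cost increases the Levenshtein distance by at most `(m + n)·k`,
where `m` and `n` are the lengths of the two lists, since any alignment uses at most
`m + n` edit operations. -/
theorem levenshtein_addConst_le {α β : Type*} (C : Levenshtein.Cost α β ℕ) (k : ℕ)
    (Q : List α) (R : List β) :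
    levenshtein (Levenshtein.Cost.addConst C k) Q R ≤
      levenshtein C Q R + (Q.length + R.length) * k := by
  induction Q generalizing R with
  | nil =>
    induction R with
    | nil => simp
    | cons y ys ih =>
      simp only [levenshtein_nil_cons, Levenshtein.Cost.addConst, List.length_cons,
        List.length_nil] at *
      have h : (0 + (ys.length + 1)) * k = (0 + ys.length) * k + k := by ring
      omega
  | cons x xs ih =>
    induction R with
    | nil =>
      have h1 := ih ([] : List β)
      simp only [levenshtein_cons_nil, Levenshtein.Cost.addConst, List.length_cons,
        List.length_nil] at *
      have h : (xs.length + 1 + 0) * k = (xs.length + 0) * k + k := by ring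
      omega
    | cons y ys ihR =>
      have h1 := ih (y :: ys)
      have h2 := ih ys
      simp only [levenshtein_cons_cons, List.length_cons, Levenshtein.Cost.addConst] at *
      have e1 : (xs.length + 1 + (ys.length + 1)) * k
          = (xs.length + (ys.length + 1)) * k + k := by ring
      have e2 : (xs.length + 1 + (ys.length + 1)) * k
          = (xs.length + 1 + ys.length) * k + k := by ring
      have e3 : (xs.length + 1 + (ys.length + 1)) * k
          = (xs.length + ys.length) * k + k + k := by ring
      omega
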